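/- Suppose n = 2 and the allocation is the weighted maximizer f(v) ∈ argmax_{x∈{a₁,a₂}} (w₁v₁(x) + w₂v₂(x)) with w₁, w₂ > 0, and payments have the form p_i(v) = h_i(v_{-i}) − (1/w_i)Σ_{j≠i} w_j v_j(f(v)). Then there is no choice of functions h₁, h₂ making the mechanism budget balanced (p₁(v) + p₂(v) = 0 for all v) over valuations drawn from the open interval (-M/2, M/2). -/

import Mathlib

/-- for two agents, a weighted-maximizer allocation with positive
weights and Groves-form payments admits no choice of `h₁, h₂` achieving budget
balance on valuations from `(-M/2) (M/2)`. -/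
theorem stmt_11 (M : ℝ) (hM : 0 < M) (w₁ w₂ : ℝ) (hw₁ : 0 < w₁) (hw₂ : 0 < w₂)
    (f : (Bool → ℝ) → (Bool → ℝ) → Bool)
    (hf : ∀ v₁ v₂ : Bool → ℝ,
      (∀ x, v₁ x ∈ Set.Ioo (-(M/2)) (M/2)) →
      (∀ x, v₂ x ∈ Set.Ioo (-(M/2)) (M/2)) →
      ∀ x : Bool, w₁ * v₁ x + w₂ * v₂ x ≤ w₁ * v₁ (f v₁ v₂) + w₂ * v₂ (f v₁ v₂)) :
    ¬ ∃ h₁ h₂ : (Bool → ℝ) → ℝ,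
      ∀ v₁ v₂ : Bool → ℝ,
        (∀ x, v₁ x ∈ Set.Ioo (-(M/2)) (M/2)) →
        (∀ x, v₂ x ∈ Set.Ioo (-(M/2)) (M/2)) →
        (h₁ v₂ - (1 / w₁) * (w₂ * v₂ (f v₁ v₂)))
          + (h₂ v₁ - (1 / w₂) * (w₁ * v₁ (f v₁ v₂))) = 0 := by
  rintro ⟨h₁, h₂, hbb⟩
  set δ : ℝ := (M/4) * (w₁/(w₁+w₂)) with hδdef
  have hw12 : 0 < w₁ + w₂ := by linarith
  have hδpos : 0 < δ := by positivity
  have hδlt : δ < M/4 := by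
    have h1 : w₁/(w₁+w₂) < 1 := by
      rw [div_lt_one hw12]; linarith
    calc δ < (M/4) * 1 := by
            apply mul_lt_mul_of_pos_left h1; linarith
      _ = M/4 := by ring
  have hkey : w₂ * δ < w₁ * (M/4) := by
    have : w₂ * δ = (M/4) * (w₂ * w₁ / (w₁+w₂)) := by rw [hδdef]; ring
    rw [this]
    have h1 : w₂ * w₁ / (w₁+w₂) < w₁ := by
      rw [div_lt_iff₀ hw12]; nlinarith
    nlinarith
  set a : Bool → ℝ := fun x => if x then M/4 else 0 with ha
  set b : Bool → ℝ := fun x => if x then 0 else M/4 with hb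
  set c : Bool → ℝ := fun x => if x then δ else 0 with hc
  set d : Bool → ℝ := fun _ => 0 with hd
  have hmem : ∀ v : Bool → ℝ, (∀ x, v x = M/4 ∨ v x = δ ∨ v x = 0) →
      ∀ x, v x ∈ Set.Ioo (-(M/2)) (M/2) := by
    intro v hv x
    rcases hv x with h | h | h <;> rw [h] <;> constructor <;> linarith
  have hma : ∀ x, a x ∈ Set.Ioo (-(M/2)) (M/2) := by
    apply hmem; intro x; cases x <;> simp [ha]
  have hmb : ∀ x, b x ∈ Set.Ioo (-(M/2)) (M/2) := by
    apply hmem; intro x; cases x <;> simp [hb]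
  have hmc : ∀ x, c x ∈ Set.Ioo (-(M/2)) (M/2) := by
    apply hmem; intro x; cases x <;> simp [hc]
  have hmd : ∀ x, d x ∈ Set.Ioo (-(M/2)) (M/2) := by
    apply hmem; intro x; cases x <;> simp [hd]
  -- determine f on the four profiles
  have ftrue : ∀ v₁ v₂, (∀ x, v₁ x ∈ Set.Ioo (-(M/2)) (M/2)) →
      (∀ x, v₂ x ∈ Set.Ioo (-(M/2)) (M/2)) →
      w₁ * v₁ false + w₂ * v₂ false < w₁ * v₁ true + w₂ * v₂ true →
      f v₁ v₂ = true := by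
    intro v₁ v₂ h1 h2 hlt
    by_contra hne
    have hF : f v₁ v₂ = false := by
      cases hh : f v₁ v₂
      · rfl
      · exact absurd hh hne
    have := hf v₁ v₂ h1 h2 true
    rw [hF] at this
    linarith
  have ffalse : ∀ v₁ v₂, (∀ x, v₁ x ∈ Set.Ioo (-(M/2)) (M/2)) →
      (∀ x, v₂ x ∈ Set.Ioo (-(M/2)) (M/2)) →
      w₁ * v₁ true + w₂ * v₂ true < w₁ * v₁ false + w₂ * v₂ false →
      f v₁ v₂ = false := by
    intro v₁ v₂ h1 h2 hlt
    by_contra hne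
    have hT : f v₁ v₂ = true := by
      cases hh : f v₁ v₂
      · exact absurd hh hne
      · rfl
    have := hf v₁ v₂ h1 h2 false
    rw [hT] at this
    linarith
  have hac : f a c = true := by
    apply ftrue a c hma hmc; simp [ha, hc]; positivity
  have had : f a d = true := by
    apply ftrue a d hma hmd; simp [ha, hd]; positivity
  have hbc : f b c = false := by
    apply ffalse b c hmb hmc; simp [hb, hc]; linarith
  have hbd : f b d = false := by
    apply ffalse b d hmb hmd; simp [hb, hd]; positivity
  have E1 := hbb a c hma hmc
  have E2 := hbb a d hma hmd
  have E3 := hbb b c hmb hmc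
  have E4 := hbb b d hmb hmd
  rw [hac] at E1; rw [had] at E2; rw [hbc] at E3; rw [hbd] at E4
  simp only [ha, hb, hc, hd] at E1 E2 E3 E4
  norm_num at E1 E2 E3 E4
  have hw₁' : w₁ ≠ 0 := ne_of_gt hw₁
  have hw₂' : w₂ ≠ 0 := ne_of_gt hw₂
  have key : w₁⁻¹ * (w₂ * δ) = 0 := by linarith
  have : w₂ * δ = 0 := by
    field_simp at key
    linarith
  nlinarith
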